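/- Let n be a positive integer, θ an irrational real number, Λ > 0 and L > 0 constants, and μ : ℝ → ℝ a smooth 1-periodic function. Set α = dx − nz·dy and γ = dz − θ·dy, and define the smooth field of symmetric bilinear forms g̃ = Λ(α⊗γ + γ⊗α) + L²·dy⊗dy + μ(y)·γ⊗γ on ℝ³. Then: (i) g̃ is invariant under Γ_n; (ii) the diffeomorphism φ₀ of ℝ³ defined by φ₀(x,y,z) = (x + z, y, z + θ/n) normalizes Γ_n; (iii) φ₀*g̃ = g̃ + 2Λ·γ⊗γ, i.e. φ₀*g̃ = g̃ + (2/Λ)·ω⊗ω where ω = g̃(∂x, ·) = Λ(dz − θdy); in particular φ₀*g̃ ≠ g̃, so φ₀ is not an isometry of g̃. -/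

import Mathlib

noncomputable section

/-- The bijection `(x,y,z) ↦ (x + φ(y,z), y + ψ(z), z + b)` of `ℝ³`. -/
def affMap (φ : ℝ × ℝ → ℝ) (ψ : ℝ → ℝ) (b : ℝ) : Equiv.Perm (ℝ × ℝ × ℝ) where
  toFun p := (p.1 + φ p.2, p.2.1 + ψ p.2.2, p.2.2 + b)
  invFun p := (p.1 - φ (p.2.1 - ψ (p.2.2 - b), p.2.2 - b), p.2.1 - ψ (p.2.2 - b), p.2.2 - b)
  left_inv := by rintro ⟨x, y, z⟩; simp
  right_inv := by rintro ⟨x, y, z⟩; simp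

/-- The group `Γ_{n,c₁,c₂}`, generated by `(x,y,z) ↦ (x+1,y,z)`,
`(x,y,z) ↦ (x+c₁,y+1,z)` and `(x,y,z) ↦ (x+ny+c₂,y,z+1)`. -/
def Gamma (n : ℕ) (c₁ c₂ : ℝ) : Subgroup (Equiv.Perm (ℝ × ℝ × ℝ)) :=
  Subgroup.closure
    { affMap (fun _ => 1) (fun _ => 0) 0,
      affMap (fun _ => c₁) (fun _ => 1) 0,
      affMap (fun q => n * q.1 + c₂) (fun _ => 0) 1 }

/-- The metric `g̃ = Λ(α⊗γ + γ⊗α) + L²·dy⊗dy + μ(y)·γ⊗γ` with `α = dx − nz·dy`,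
`γ = dz − θ·dy` and constants `Λ, L`. -/
def gThirteen (n : ℕ) (θ Λ L : ℝ) (μ : ℝ → ℝ) (p u v : ℝ × ℝ × ℝ) : ℝ :=
  Λ * ((u.1 - n * p.2.2 * u.2.1) * (v.2.2 - θ * v.2.1)
      + (u.2.2 - θ * u.2.1) * (v.1 - n * p.2.2 * v.2.1))
    + L ^ 2 * u.2.1 * v.2.1
    + μ p.2.1 * ((u.2.2 - θ * u.2.1) * (v.2.2 - θ * v.2.1))

/-- The element `(x,y,z) ↦ (x + nk·y + a, y + b, z + k)` of `Γ_n`. -/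
def Phi (n : ℕ) (a b k : ℤ) : Equiv.Perm (ℝ × ℝ × ℝ) :=
  affMap (fun q => (n : ℝ) * (k : ℝ) * q.1 + (a : ℝ)) (fun _ => (b : ℝ)) (k : ℝ)

lemma Phi_apply (n : ℕ) (a b k : ℤ) (p : ℝ × ℝ × ℝ) :
    Phi n a b k p = (p.1 + (n : ℝ) * k * p.2.1 + a, p.2.1 + b, p.2.2 + k) := by
  simp [Phi, affMap]; ring

lemma Phi_mul (n : ℕ) (a b k a' b' k' : ℤ) :
    Phi n a b k * Phi n a' b' k' = Phi n (a + a' + n * k * b') (b + b') (k + k') := by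
  refine Equiv.ext fun p => ?_
  simp only [Equiv.Perm.coe_mul, Function.comp_apply, Phi_apply, Prod.mk.injEq]
  refine ⟨by push_cast; ring, by push_cast; ring, by push_cast; ring⟩

lemma Phi_one (n : ℕ) : Phi n 0 0 0 = 1 := by
  refine Equiv.ext fun p => ?_
  simp [Phi_apply]

lemma Phi_inv (n : ℕ) (a b k : ℤ) :
    (Phi n a b k)⁻¹ = Phi n (n * k * b - a) (-b) (-k) := by
  refine inv_eq_of_mul_eq_one_right ?_
  rw [Phi_mul, ← Phi_one n]
  congr 1 <;> ring

/-- The subgroup of all `Phi n a b k`. -/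
def Sgrp (n : ℕ) : Subgroup (Equiv.Perm (ℝ × ℝ × ℝ)) where
  carrier := {φ | ∃ a b k : ℤ, φ = Phi n a b k}
  one_mem' := ⟨0, 0, 0, (Phi_one n).symm⟩
  mul_mem' := by
    rintro _ _ ⟨a, b, k, rfl⟩ ⟨a', b', k', rfl⟩
    exact ⟨_, _, _, (Phi_mul n a b k a' b' k')⟩
  inv_mem' := by
    rintro _ ⟨a, b, k, rfl⟩
    exact ⟨_, _, _, (Phi_inv n a b k)⟩

lemma Gamma_eq (n : ℕ) : Gamma n 0 0 = Sgrp n := by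
  have hg1 : affMap (fun _ => (1:ℝ)) (fun _ => 0) 0 = Phi n 1 0 0 := by
    refine Equiv.ext fun p => ?_; simp [Phi_apply, affMap]
  have hg2 : affMap (fun _ => (0:ℝ)) (fun _ => 1) 0 = Phi n 0 1 0 := by
    refine Equiv.ext fun p => ?_; simp [Phi_apply, affMap]
  have hg3 : affMap (fun q : ℝ × ℝ => (n : ℝ) * q.1 + 0) (fun _ => 0) 1 = Phi n 0 0 1 := by
    refine Equiv.ext fun p => ?_; simp [Phi_apply, affMap]
  apply le_antisymm
  · rw [Gamma, Subgroup.closure_le]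
    rintro φ (rfl | rfl | rfl)
    · exact ⟨1, 0, 0, hg1⟩
    · exact ⟨0, 1, 0, hg2⟩
    · exact ⟨0, 0, 1, hg3⟩
  · rintro φ ⟨a, b, k, rfl⟩
    have h1 : ∀ a : ℤ, Phi n a 0 0 ∈ Gamma n 0 0 := by
      intro a
      induction a using Int.induction_on with
      | zero => rw [Phi_one]; exact one_mem _
      | succ i ih =>
          have h : Phi n (i + 1) 0 0 = Phi n i 0 0 * Phi n 1 0 0 := by
            rw [Phi_mul]; norm_num
          rw [h]
          exact mul_mem ih (Subgroup.subset_closure (by rw [hg1]; left; rfl))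
      | pred i ih =>
          have h : Phi n (-i - 1) 0 0 = Phi n (-i) 0 0 * (Phi n 1 0 0)⁻¹ := by
            rw [Phi_inv, Phi_mul]; congr 1 <;> ring
          rw [h]
          exact mul_mem ih (inv_mem (Subgroup.subset_closure (by rw [hg1]; left; rfl)))
    have h2 : ∀ b : ℤ, Phi n 0 b 0 ∈ Gamma n 0 0 := by
      intro b
      induction b using Int.induction_on with
      | zero => rw [Phi_one]; exact one_mem _
      | succ i ih =>
          have h : Phi n 0 (i + 1) 0 = Phi n 0 i 0 * Phi n 0 1 0 := by
            rw [Phi_mul]; norm_num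
          rw [h]
          exact mul_mem ih (Subgroup.subset_closure (by rw [hg2]; right; left; rfl))
      | pred i ih =>
          have h : Phi n 0 (-i - 1) 0 = Phi n 0 (-i) 0 * (Phi n 0 1 0)⁻¹ := by
            rw [Phi_inv, Phi_mul]; congr 1 <;> ring
          rw [h]
          exact mul_mem ih (inv_mem (Subgroup.subset_closure (by rw [hg2]; right; left; rfl)))
    have h3 : ∀ k : ℤ, Phi n 0 0 k ∈ Gamma n 0 0 := by
      intro k
      induction k using Int.induction_on with
      | zero => rw [Phi_one]; exact one_mem _
      | succ i ih =>
          have h : Phi n 0 0 (i + 1) = Phi n 0 0 i * Phi n 0 0 1 := by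
            rw [Phi_mul]; norm_num
          rw [h]
          exact mul_mem ih (Subgroup.subset_closure (by rw [hg3]; right; right; rfl))
      | pred i ih =>
          have h : Phi n 0 0 (-i - 1) = Phi n 0 0 (-i) * (Phi n 0 0 1)⁻¹ := by
            rw [Phi_inv, Phi_mul]; congr 1 <;> ring
          rw [h]
          exact mul_mem ih (inv_mem (Subgroup.subset_closure (by rw [hg3]; right; right; rfl)))
    have h : Phi n a b k = Phi n a 0 0 * Phi n 0 b 0 * Phi n 0 0 k := by
      rw [Phi_mul, Phi_mul]; norm_num
    rw [h]
    exact mul_mem (mul_mem (h1 a) (h2 b)) (h3 k)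

/-- Linear map `u ↦ (u.1 + c₁·u.2.1 + c₂·u.2.2, u.2)`. -/
def Lmap (c1 c2 : ℝ) : (ℝ × ℝ × ℝ) →L[ℝ] (ℝ × ℝ × ℝ) :=
  (ContinuousLinearMap.fst ℝ ℝ (ℝ × ℝ)
    + c1 • ((ContinuousLinearMap.fst ℝ ℝ ℝ).comp (ContinuousLinearMap.snd ℝ ℝ (ℝ × ℝ)))
    + c2 • ((ContinuousLinearMap.snd ℝ ℝ ℝ).comp (ContinuousLinearMap.snd ℝ ℝ (ℝ × ℝ)))).prod
    (ContinuousLinearMap.snd ℝ ℝ (ℝ × ℝ))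

lemma Lmap_apply (c1 c2 : ℝ) (u : ℝ × ℝ × ℝ) :
    Lmap c1 c2 u = (u.1 + c1 * u.2.1 + c2 * u.2.2, u.2.1, u.2.2) := by
  simp [Lmap, smul_eq_mul]

lemma fderiv_aff (c1 c2 a0 b0 k0 : ℝ) (p : ℝ × ℝ × ℝ) :
    fderiv ℝ (fun q : ℝ × ℝ × ℝ => (q.1 + c1 * q.2.1 + c2 * q.2.2 + a0, q.2.1 + b0, q.2.2 + k0)) p
      = Lmap c1 c2 := by
  have h : (fun q : ℝ × ℝ × ℝ => (q.1 + c1 * q.2.1 + c2 * q.2.2 + a0, q.2.1 + b0, q.2.2 + k0))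
      = fun q => Lmap c1 c2 q + (a0, b0, k0) := by
    funext q
    simp [Lmap_apply, Prod.ext_iff]
  rw [h]
  exact (((Lmap c1 c2).hasFDerivAt).add_const _).fderiv

lemma Phi_coe (n : ℕ) (a b k : ℤ) :
    ⇑(Phi n a b k) = fun q : ℝ × ℝ × ℝ =>
      (q.1 + ((n : ℝ) * (k : ℝ)) * q.2.1 + 0 * q.2.2 + (a : ℝ),
        q.2.1 + (b : ℝ), q.2.2 + (k : ℝ)) := by
  funext q
  rw [Phi_apply]
  simp [Prod.ext_iff]

lemma phi0_coe (t : ℝ) :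
    ⇑(affMap (fun w => w.2) (fun _ => 0) t) = fun q : ℝ × ℝ × ℝ =>
      (q.1 + 0 * q.2.1 + 1 * q.2.2 + 0, q.2.1 + 0, q.2.2 + t) := by
  funext q
  simp [affMap]

lemma phi0_conj (n : ℕ) (t : ℝ) (a b k : ℤ) :
    affMap (fun w => w.2) (fun _ => 0) t * Phi n a b k
        * (affMap (fun w => w.2) (fun _ => 0) t)⁻¹ = Phi n (a + k) b k := by
  refine Equiv.ext fun p => ?_
  simp only [Equiv.Perm.coe_mul, Function.comp_apply, Equiv.Perm.inv_def]
  rw [Phi_apply, Phi_apply]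
  simp [affMap, Prod.ext_iff]
  refine ⟨by push_cast; ring, by ring⟩

lemma phi0_conj' (n : ℕ) (t : ℝ) (a b k : ℤ) :
    (affMap (fun w => w.2) (fun _ => 0) t)⁻¹ * Phi n a b k
        * affMap (fun w => w.2) (fun _ => 0) t = Phi n (a - k) b k := by
  refine Equiv.ext fun p => ?_
  simp only [Equiv.Perm.coe_mul, Function.comp_apply, Equiv.Perm.inv_def]
  rw [Phi_apply, Phi_apply]
  simp [affMap, Prod.ext_iff]
  refine ⟨by push_cast; ring, by ring⟩

/-- For `n > 0`, `θ` irrational, `Λ, L > 0` and `μ` smooth 1-periodic: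
(i) `g̃` is `Γ_n`-invariant; (ii) `φ₀ : (x,y,z) ↦ (x+z, y, z+θ/n)` normalizes `Γ_n`;
(iii) `φ₀*g̃ = g̃ + 2Λ·γ⊗γ` where `γ = dz − θ·dy` and `g̃(∂x,·) = Λ(dz − θdy)`;
in particular `φ₀*g̃ ≠ g̃`, so `φ₀` is not an isometry of `g̃`. -/
theorem stmt_13 (n : ℕ) (hn : 0 < n) (θ : ℝ) (hθ : Irrational θ)
    (Λ L : ℝ) (hΛ : 0 < Λ) (hL : 0 < L)
    (μ : ℝ → ℝ) (hμs : ContDiff ℝ (⊤ : ℕ∞) μ) (hμper : ∀ y : ℝ, μ (y + 1) = μ y) :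
    (∀ φ ∈ Gamma n 0 0, ∀ p u v : ℝ × ℝ × ℝ,
      gThirteen n θ Λ L μ (φ p) (fderiv ℝ (⇑φ) p u) (fderiv ℝ (⇑φ) p v)
        = gThirteen n θ Λ L μ p u v) ∧
    (affMap (fun w => w.2) (fun _ => 0) (θ / n) ∈ Subgroup.normalizer (Gamma n 0 0 : Set (Equiv.Perm (ℝ × ℝ × ℝ)))) ∧
    (∀ p v : ℝ × ℝ × ℝ, gThirteen n θ Λ L μ p (1, 0, 0) v = Λ * (v.2.2 - θ * v.2.1)) ∧
    (∀ p u v : ℝ × ℝ × ℝ,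
      gThirteen n θ Λ L μ (affMap (fun w => w.2) (fun _ => 0) (θ / n) p)
          (fderiv ℝ (⇑(affMap (fun w => w.2) (fun _ => 0) (θ / n))) p u)
          (fderiv ℝ (⇑(affMap (fun w => w.2) (fun _ => 0) (θ / n))) p v)
        = gThirteen n θ Λ L μ p u v
          + 2 * Λ * ((u.2.2 - θ * u.2.1) * (v.2.2 - θ * v.2.1))) ∧
    (∃ p u v : ℝ × ℝ × ℝ,
      gThirteen n θ Λ L μ (affMap (fun w => w.2) (fun _ => 0) (θ / n) p)
          (fderiv ℝ (⇑(affMap (fun w => w.2) (fun _ => 0) (θ / n))) p u)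
          (fderiv ℝ (⇑(affMap (fun w => w.2) (fun _ => 0) (θ / n))) p v)
        ≠ gThirteen n θ Λ L μ p u v) := by
  have hn' : (n : ℝ) ≠ 0 := Nat.cast_ne_zero.mpr hn.ne'
  have hper : ∀ (b : ℤ) (y : ℝ), μ (y + b) = μ y := by
    intro b y
    have := (Function.Periodic.int_mul hμper b) y
    simpa using this
  have h4 : ∀ p u v : ℝ × ℝ × ℝ,
      gThirteen n θ Λ L μ (affMap (fun w => w.2) (fun _ => 0) (θ / n) p)
          (fderiv ℝ (⇑(affMap (fun w => w.2) (fun _ => 0) (θ / n))) p u)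
          (fderiv ℝ (⇑(affMap (fun w => w.2) (fun _ => 0) (θ / n))) p v)
        = gThirteen n θ Λ L μ p u v
          + 2 * Λ * ((u.2.2 - θ * u.2.1) * (v.2.2 - θ * v.2.1)) := by
    intro p u v
    rw [phi0_coe, fderiv_aff]
    simp only [gThirteen, Lmap_apply]
    field_simp
    ring
  refine ⟨?_, ?_, ?_, h4, ?_⟩
  · intro φ hφ p u v
    rw [Gamma_eq] at hφ
    obtain ⟨a, b, k, rfl⟩ := hφ
    rw [Phi_coe, fderiv_aff]
    simp only [gThirteen, Lmap_apply]
    rw [hper b p.2.1]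
    ring
  · rw [Gamma_eq, Subgroup.mem_normalizer_iff]
    intro h
    constructor
    · rintro ⟨a, b, k, rfl⟩
      exact ⟨a + k, b, k, phi0_conj n (θ / n) a b k⟩
    · rintro ⟨a, b, k, hh⟩
      have hrw : h = (affMap (fun w => w.2) (fun _ => 0) (θ / n))⁻¹ * Phi n a b k
          * affMap (fun w => w.2) (fun _ => 0) (θ / n) := by
        rw [← hh]; group
      rw [hrw, phi0_conj']
      exact ⟨_, _, _, rfl⟩
  · intro p v
    simp only [gThirteen]
    ring
  · refine ⟨0, (0, 0, 1), (0, 0, 1), ?_⟩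
    rw [h4]
    simp only [ne_eq]
    intro hcontra
    nlinarith
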